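/- arXiv:2401.04659 — 5 statements merged into one kernel-verified Lean document; each statement's English description precedes it below -/
import Mathlib

section
/- For the L²-normalized Gaussian φ(x) = 2^{d/4} e^{-π|x|²} on ℝ^d, and its time-frequency shifts φ_z(x) = e^{2πi ω₀·x} φ(x - x₀) for z = (x₀, ω₀) ∈ ℝ^{2d}, the squared modulus of the inner product satisfies |⟨φ_z, φ_w⟩_{L²(ℝ^d)}|² = e^{-π|z-w|²} for all z, w ∈ ℝ^{2d}. -/
open MeasureTheory Real Complex

/-- The L²-normalized Gaussian window on ℝ^d. -/
noncomputable def gaussWindow (d : ℕ) (x : EuclideanSpace ℝ (Fin d)) : ℂ :=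
  (2 : ℂ) ^ ((d : ℂ) / 4) * Complex.exp (-(π : ℂ) * (‖x‖ : ℂ) ^ 2)

/-- The time-frequency shift φ_z of the Gaussian window, z = (x₀, ω₀). -/
noncomputable def tfShiftGauss (d : ℕ)
    (z : EuclideanSpace ℝ (Fin d) × EuclideanSpace ℝ (Fin d))
    (x : EuclideanSpace ℝ (Fin d)) : ℂ :=
  Complex.exp (2 * (π : ℂ) * Complex.I * (inner ℝ z.2 x : ℝ)) * gaussWindow d (x - z.1)

lemma gaussB_aux (d : ℕ) (c : Fin d → ℂ) :
    ∫ x : EuclideanSpace ℝ (Fin d), Complex.exp (-(2*(π:ℂ)) * ‖x‖^2 + ∑ i, c i * (x i)) =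
      ((π:ℂ)/(2*π)) ^ ((d:ℂ)/2) * Complex.exp ((∑ i, c i ^ 2)/(4*(2*π))) := by
  have hmp := (EuclideanSpace.volume_preserving_symm_measurableEquiv_toLp (Fin d)).symm
  rw [← hmp.integral_comp (MeasurableEquiv.measurableEmbedding _)]
  have hb : (0:ℝ) < (2*(π:ℂ)).re := by simp [Real.pi_pos]
  have := GaussianFourier.integral_cexp_neg_mul_sum_add (b := 2*(π:ℂ)) hb c
  rw [show ((d:ℂ)/2) = ((Fintype.card (Fin d) : ℂ)/2) by simp, ← this]
  congr 1 with v
  congr 2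
  · congr 1
    have : ‖(MeasurableEquiv.toLp 2 (Fin d → ℝ)).symm.symm v‖^2 = ∑ i, (v i)^2 := by
      rw [EuclideanSpace.norm_eq]
      rw [Real.sq_sqrt (by positivity)]
      simp [sq_abs]
    rw [show ((‖(MeasurableEquiv.toLp 2 (Fin d → ℝ)).symm.symm v‖:ℂ)^2 : ℂ)
        = ((∑ i, (v i)^2 : ℝ) : ℂ) by exact_mod_cast congrArg Complex.ofReal this]
    push_cast
    ring

lemma tfShiftGauss_pointwise (d : ℕ)
    (z w : EuclideanSpace ℝ (Fin d) × EuclideanSpace ℝ (Fin d))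
    (x : EuclideanSpace ℝ (Fin d)) :
    tfShiftGauss d z x * (starRingEnd ℂ) (tfShiftGauss d w x)
      = (((2:ℝ) ^ ((d:ℝ)/2) : ℝ) : ℂ) *
          Complex.exp (((-π * (‖z.1‖^2 + ‖w.1‖^2) : ℝ) : ℂ)) *
          Complex.exp (-(2*(π:ℂ)) * ‖x‖^2 +
            ∑ i, (((2*π*(z.1 i + w.1 i) : ℝ) : ℂ)
                  + ((2*π*(z.2 i - w.2 i) : ℝ) : ℂ) * Complex.I) * (x i : ℂ)) := by
  have h2 : (2:ℂ) ^ ((d:ℂ)/4) = (((2:ℝ) ^ ((d:ℝ)/4) : ℝ) : ℂ) := by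
    rw [Complex.ofReal_cpow (by norm_num)]
    push_cast; ring_nf
  have hsum : ∑ i, (((2*π*(z.1 i + w.1 i) : ℝ) : ℂ)
                  + ((2*π*(z.2 i - w.2 i) : ℝ) : ℂ) * Complex.I) * (x i : ℂ)
      = ((2*π*((inner ℝ z.1 x : ℝ) + (inner ℝ w.1 x : ℝ)) : ℝ) : ℂ)
        + ((2*π*((inner ℝ z.2 x : ℝ) - (inner ℝ w.2 x : ℝ)) : ℝ) : ℂ) * Complex.I := by
    simp only [PiLp.inner_apply, RCLike.inner_apply, conj_trivial]
    push_cast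
    rw [← Finset.sum_add_distrib, ← Finset.sum_sub_distrib, Finset.mul_sum, Finset.mul_sum,
      Finset.sum_mul, ← Finset.sum_add_distrib]
    exact Finset.sum_congr rfl fun i _ => by ring
  have hnorm : ∀ a : EuclideanSpace ℝ (Fin d),
      ‖x - a‖^2 = ‖x‖^2 - 2*(inner ℝ a x : ℝ) + ‖a‖^2 := by
    intro a
    rw [norm_sub_sq_real, real_inner_comm]
  simp only [tfShiftGauss, gaussWindow, map_mul, ← Complex.exp_conj, map_mul, map_neg, map_pow,
    Complex.conj_ofReal, Complex.conj_I, h2, map_ofNat, conj_trivial]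
  rw [hsum]
  have hca : ((‖x - z.1‖:ℂ))^2 = ((‖x - z.1‖^2 : ℝ) : ℂ) := by push_cast; ring
  have hcb : ((‖x - w.1‖:ℂ))^2 = ((‖x - w.1‖^2 : ℝ) : ℂ) := by push_cast; ring
  rw [hca, hcb, hnorm z.1, hnorm w.1]
  have key : ∀ (S1 A B D Cc : ℂ), cexp S1 * (Cc * cexp A) * (cexp B * (Cc * cexp D))
      = Cc * Cc * cexp (S1 + A + B + D) := by
    intros; rw [Complex.exp_add, Complex.exp_add, Complex.exp_add]; ring
  have key2 : ∀ (K Cst E : ℂ), K * cexp Cst * cexp E = K * cexp (Cst + E) := by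
    intros; rw [Complex.exp_add, mul_assoc]
  rw [key, key2]
  congr 1
  · rw [← Complex.ofReal_mul, ← Real.rpow_add two_pos]
    norm_num
    congr 1
    ring
  · push_cast; ring

theorem sq_abs_inner_tfShiftGauss (d : ℕ)
    (z w : EuclideanSpace ℝ (Fin d) × EuclideanSpace ℝ (Fin d)) :
    ‖∫ x : EuclideanSpace ℝ (Fin d),
        tfShiftGauss d z x * (starRingEnd ℂ) (tfShiftGauss d w x)‖ ^ 2
      = Real.exp (-π * (‖z.1 - w.1‖ ^ 2 + ‖z.2 - w.2‖ ^ 2)) := by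
  set c : Fin d → ℂ := fun i => (((2*π*(z.1 i + w.1 i) : ℝ) : ℂ)
      + ((2*π*(z.2 i - w.2 i) : ℝ) : ℂ) * Complex.I) with hc
  have hint : ∫ x : EuclideanSpace ℝ (Fin d),
        tfShiftGauss d z x * (starRingEnd ℂ) (tfShiftGauss d w x)
      = (((2:ℝ) ^ ((d:ℝ)/2) : ℝ) : ℂ) *
          Complex.exp (((-π * (‖z.1‖^2 + ‖w.1‖^2) : ℝ) : ℂ)) *
          (((π:ℂ)/(2*π)) ^ ((d:ℂ)/2) * Complex.exp ((∑ i, c i ^ 2)/(4*(2*π)))) := by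
    rw [← gaussB_aux d c, ← integral_const_mul]
    refine integral_congr_ae (Filter.Eventually.of_forall fun x => ?_)
    show tfShiftGauss d z x * (starRingEnd ℂ) (tfShiftGauss d w x) = _
    beta_reduce
    rw [hc, tfShiftGauss_pointwise, mul_assoc]
  rw [hint]
  -- compute the real part of the sum
  have hterm : ∀ (A B : ℝ), ((((A:ℂ) + (B:ℂ)*Complex.I))^2).re = A^2 - B^2 := by
    intro A B
    simp [sq, Complex.mul_re, Complex.add_re, Complex.add_im, Complex.mul_im]
    try ring
  have hn : ∀ y : EuclideanSpace ℝ (Fin d), ‖y‖^2 = ∑ i, (y i)^2 := by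
    intro y
    rw [EuclideanSpace.norm_eq, Real.sq_sqrt (by positivity)]
    simp [_root_.sq_abs]
  have hSre : (∑ i, c i ^ 2).re
      = 4*π^2*(2*‖z.1‖^2 + 2*‖w.1‖^2 - ‖z.1 - w.1‖^2 - ‖z.2 - w.2‖^2) := by
    rw [Complex.re_sum]
    have h1 : ∀ i, (c i ^ 2).re = (2*π*(z.1 i + w.1 i))^2 - (2*π*(z.2 i - w.2 i))^2 :=
      fun i => hterm _ _
    simp only [h1]
    rw [hn, hn, hn, hn]
    simp only [PiLp.sub_apply]
    simp only [Finset.mul_sum, ← Finset.sum_sub_distrib, ← Finset.sum_add_distrib]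
    exact Finset.sum_congr rfl fun i _ => by ring
  rw [norm_mul, norm_mul, norm_mul]
  have hπ : (π:ℂ) ≠ 0 := Complex.ofReal_ne_zero.2 Real.pi_ne_zero
  have e1 : ‖(((2:ℝ) ^ ((d:ℝ)/2) : ℝ) : ℂ)‖ = (2:ℝ) ^ ((d:ℝ)/2) := by
    rw [Complex.norm_real, Real.norm_eq_abs, abs_of_pos (by positivity)]
  have e2 : ‖cexp (((-π * (‖z.1‖^2 + ‖w.1‖^2) : ℝ) : ℂ))‖
      = Real.exp (-π * (‖z.1‖^2 + ‖w.1‖^2)) := by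
    rw [Complex.norm_exp, Complex.ofReal_re]
  have e3 : ‖((π:ℂ)/(2*(π:ℂ))) ^ ((d:ℂ)/2)‖ = ((1/2:ℝ)) ^ ((d:ℝ)/2) := by
    have hhalf : ((π:ℂ)/(2*(π:ℂ))) = (((1/2 : ℝ)):ℂ) := by
      rw [mul_comm, div_mul_eq_div_div, div_self hπ]
      norm_num
    rw [hhalf, show ((d:ℂ)/2) = (((d/2 : ℝ)):ℂ) by push_cast; ring,
      Complex.norm_cpow_eq_rpow_re_of_pos (by norm_num)]
    norm_num
  have e4 : ‖cexp ((∑ i, c i ^ 2)/(4*(2*(π:ℂ))))‖ = Real.exp ((∑ i, c i ^ 2).re/(8*π)) := by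
    rw [Complex.norm_exp]
    congr 1
    rw [show (4*(2*(π:ℂ))) = ((8*π : ℝ):ℂ) by push_cast; ring, Complex.div_ofReal_re]
  rw [e1, e2, e3, e4, hSre]
  have hpow : (2:ℝ) ^ ((d:ℝ)/2) * (1/2:ℝ) ^ ((d:ℝ)/2) = 1 := by
    rw [← Real.mul_rpow (by norm_num) (by norm_num)]
    norm_num
  have hcomb : ∀ (r1 r2 : ℝ), (2:ℝ) ^ ((d:ℝ)/2) * Real.exp r1
      * ((1/2:ℝ) ^ ((d:ℝ)/2) * Real.exp r2) = Real.exp (r1 + r2) := by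
    intro r1 r2
    calc (2:ℝ) ^ ((d:ℝ)/2) * Real.exp r1 * ((1/2:ℝ) ^ ((d:ℝ)/2) * Real.exp r2)
        = ((2:ℝ) ^ ((d:ℝ)/2) * (1/2:ℝ) ^ ((d:ℝ)/2)) * (Real.exp r1 * Real.exp r2) := by ring
      _ = Real.exp (r1 + r2) := by rw [hpow, one_mul, Real.exp_add]
  rw [hcomb, sq, ← Real.exp_add]
  congr 1
  field_simp
  ring
end

section
/- Let (X, μ) be a σ-finite measure space, H a separable Hilbert space, and x ↦ φ_x a map from X to H such that x ↦ ⟨f, φ_x⟩ is measurable for every f ∈ H and ‖φ_x‖ ≤ c₁ for a.e. x ∈ X. Then for every F ∈ L¹(X) the operator L_F defined weakly by ⟨L_F f, g⟩ = ∫_X F(x) ⟨f, φ_x⟩ ⟨φ_x, g⟩ dμ(x) is trace class, with trace tr L_F = ∫_X F(x) ‖φ_x‖² dμ(x). -/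
open MeasureTheory

local notation "⟪" x ", " y "⟫" => @inner ℂ _ _ x y

/-- A bounded operator `T` on a Hilbert space is trace class iff for every pair of
orthonormal sequences `(e n)`, `(f n)` the series `∑ |⟪e n, T (f n)⟫|` converges. -/
def IsTraceClassOp {H : Type*} [NormedAddCommGroup H] [InnerProductSpace ℂ H]
    (T : H →L[ℂ] H) : Prop :=
  ∀ e f : ℕ → H, Orthonormal ℂ e → Orthonormal ℂ f →
    Summable fun n => ‖⟪e n, T (f n)⟫‖

lemma conj_mul_self_eq_norm_sq (z : ℂ) :
    (starRingEnd ℂ) z * z = ((‖z‖ : ℝ) : ℂ) ^ 2 := by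
  rw [← Complex.normSq_eq_conj_mul_self]
  norm_cast
  exact (Complex.sq_norm z).symm

theorem localization_op_traceClass
    {X : Type*} [MeasurableSpace X] (μ : Measure X) [SigmaFinite μ]
    {H : Type*} [NormedAddCommGroup H] [InnerProductSpace ℂ H] [CompleteSpace H]
    [TopologicalSpace.SeparableSpace H]
    (φ : X → H) (c₁ : ℝ)
    (hmeas : ∀ f : H, Measurable fun x => ⟪φ x, f⟫)
    (hbdd : ∀ᵐ x ∂μ, ‖φ x‖ ≤ c₁)
    (F : X → ℂ) (hF : Integrable F μ)
    (L : H →L[ℂ] H)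
    (hL : ∀ f g : H, ⟪g, L f⟫ = ∫ x, F x * ⟪φ x, f⟫ * ⟪g, φ x⟫ ∂μ) :
    IsTraceClassOp L ∧
      ∀ {ι : Type} [Countable ι] (b : HilbertBasis ι ℂ H),
        ∑' i, ⟪b i, L (b i)⟫ = ∫ x, F x * (‖φ x‖ : ℂ) ^ 2 ∂μ := by
  classical
  have hbdd2 : ∀ᵐ x ∂μ, ‖φ x‖ ^ 2 ≤ c₁ ^ 2 := by
    filter_upwards [hbdd] with x hx
    have h0 : (0:ℝ) ≤ ‖φ x‖ := norm_nonneg _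
    nlinarith
  have hmeas' : ∀ f : H, Measurable fun x => ⟪(f : H), φ x⟫ := by
    intro f
    have : (fun x => ⟪(f : H), φ x⟫) = fun x => (starRingEnd ℂ) ⟪φ x, f⟫ := by
      funext x; rw [inner_conj_symm]
    rw [this]
    exact Complex.continuous_conj.measurable.comp (hmeas f)
  constructor
  · intro e f he hf
    set g : ℕ → X → ℝ := fun n x => ‖F x‖ * (‖⟪φ x, f n⟫‖ * ‖⟪e n, φ x⟫‖) with hg
    have hgmeas : ∀ n, AEStronglyMeasurable (g n) μ := fun n =>
      hF.1.norm.mul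
        (((hmeas (f n)).norm.mul (hmeas' (e n)).norm).aestronglyMeasurable)
    have key : ∀ (s : Finset ℕ) (x : X),
        ∑ n ∈ s, ‖⟪φ x, f n⟫‖ * ‖⟪e n, φ x⟫‖ ≤ ‖φ x‖ ^ 2 := by
      intro s x
      have h1 : (∑ n ∈ s, ‖⟪φ x, f n⟫‖ * ‖⟪e n, φ x⟫‖) ^ 2
          ≤ (∑ n ∈ s, ‖⟪φ x, f n⟫‖ ^ 2) * ∑ n ∈ s, ‖⟪e n, φ x⟫‖ ^ 2 :=
        Finset.sum_mul_sq_le_sq_mul_sq s _ _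
      have h2 : ∑ n ∈ s, ‖⟪φ x, f n⟫‖ ^ 2 ≤ ‖φ x‖ ^ 2 := by
        have := hf.sum_inner_products_le (φ x) (s := s)
        calc ∑ n ∈ s, ‖⟪φ x, f n⟫‖ ^ 2 = ∑ n ∈ s, ‖⟪f n, φ x⟫‖ ^ 2 := by
              simp [norm_inner_symm]
          _ ≤ ‖φ x‖ ^ 2 := this
      have h3 : ∑ n ∈ s, ‖⟪e n, φ x⟫‖ ^ 2 ≤ ‖φ x‖ ^ 2 :=
        he.sum_inner_products_le (φ x) (s := s)
      have hsum0 : (0:ℝ) ≤ ∑ n ∈ s, ‖⟪φ x, f n⟫‖ * ‖⟪e n, φ x⟫‖ :=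
        Finset.sum_nonneg fun n _ => mul_nonneg (norm_nonneg _) (norm_nonneg _)
      have hs20 : (0:ℝ) ≤ ∑ n ∈ s, ‖⟪φ x, f n⟫‖ ^ 2 :=
        Finset.sum_nonneg fun n _ => sq_nonneg _
      nlinarith [sq_nonneg (‖φ x‖)]
    have hgbound : ∀ n, ∀ᵐ x ∂μ, ‖g n x‖ ≤ c₁ ^ 2 * ‖F x‖ := by
      intro n
      filter_upwards [hbdd2] with x hx
      have h1 : ‖⟪φ x, f n⟫‖ * ‖⟪e n, φ x⟫‖ ≤ ‖φ x‖ ^ 2 := by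
        simpa using key {n} x
      have hgnn : 0 ≤ g n x :=
        mul_nonneg (norm_nonneg _) (mul_nonneg (norm_nonneg _) (norm_nonneg _))
      rw [Real.norm_of_nonneg hgnn]
      calc g n x ≤ ‖F x‖ * (c₁ ^ 2) :=
            mul_le_mul_of_nonneg_left (h1.trans hx) (norm_nonneg _)
        _ = c₁ ^ 2 * ‖F x‖ := mul_comm _ _
    have hgint : ∀ n, Integrable (g n) μ := fun n =>
      ((hF.norm.const_mul (c₁ ^ 2)).mono' (hgmeas n) (hgbound n))
    have step1 : ∀ k, ‖⟪e k, L (f k)⟫‖ ≤ ∫ x, g k x ∂μ := by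
      intro k
      rw [hL]
      refine (norm_integral_le_integral_norm _).trans_eq ?_
      simp only [hg, norm_mul, mul_assoc]
    have hbound : ∀ n : ℕ,
        ∑ k ∈ Finset.range n, ‖⟪e k, L (f k)⟫‖ ≤ c₁ ^ 2 * ∫ x, ‖F x‖ ∂μ := by
      intro n
      calc ∑ k ∈ Finset.range n, ‖⟪e k, L (f k)⟫‖
          ≤ ∑ k ∈ Finset.range n, ∫ x, g k x ∂μ :=
            Finset.sum_le_sum fun k _ => step1 k
        _ = ∫ x, ∑ k ∈ Finset.range n, g k x ∂μ :=
            (integral_finset_sum _ fun k _ => hgint k).symm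
        _ ≤ ∫ x, c₁ ^ 2 * ‖F x‖ ∂μ := by
            refine integral_mono_ae (integrable_finset_sum _ fun k _ => hgint k)
              (hF.norm.const_mul _) ?_
            filter_upwards [hbdd2] with x hx
            have : ∑ k ∈ Finset.range n, g k x
                = ‖F x‖ * ∑ k ∈ Finset.range n, ‖⟪φ x, f k⟫‖ * ‖⟪e k, φ x⟫‖ := by
              simp [hg, Finset.mul_sum]
            rw [this]
            calc ‖F x‖ * ∑ k ∈ Finset.range n, ‖⟪φ x, f k⟫‖ * ‖⟪e k, φ x⟫‖
                ≤ ‖F x‖ * (c₁ ^ 2) :=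
                  mul_le_mul_of_nonneg_left ((key _ x).trans hx) (norm_nonneg _)
              _ = c₁ ^ 2 * ‖F x‖ := mul_comm _ _
        _ = c₁ ^ 2 * ∫ x, ‖F x‖ ∂μ := integral_const_mul _ _
    exact summable_of_sum_range_le (fun n => norm_nonneg _) hbound
  · intro ι _ b
    have hz : ∀ (x : X) (i : ι),
        ⟪φ x, b i⟫ * ⟪b i, φ x⟫ = ((‖⟪b i, φ x⟫‖ : ℝ) : ℂ) ^ 2 := by
      intro x i
      rw [← inner_conj_symm (φ x) (b i)]
      exact conj_mul_self_eq_norm_sq _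
    have hParseval : ∀ x : X, HasSum (fun i => ‖⟪b i, φ x⟫‖ ^ 2) (‖φ x‖ ^ 2) := by
      intro x
      have h := b.hasSum_inner_mul_inner (φ x) (φ x)
      rw [inner_self_eq_norm_sq_to_K] at h
      have h2 : HasSum (fun i => ((‖⟪b i, φ x⟫‖ ^ 2 : ℝ) : ℂ)) ((‖φ x‖ ^ 2 : ℝ) : ℂ) := by
        have hfun : (fun i => ((‖⟪b i, φ x⟫‖ ^ 2 : ℝ) : ℂ))
            = fun i => ⟪φ x, b i⟫ * ⟪b i, φ x⟫ := by
          funext i; rw [hz x i]; push_cast; ring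
        rw [hfun]
        convert h using 2
        norm_cast
        exact Complex.ofReal_pow _ _
      exact Complex.hasSum_ofReal.mp h2
    have hfi_meas : ∀ i, AEStronglyMeasurable
        (fun x => F x * ⟪φ x, b i⟫ * ⟪b i, φ x⟫) μ := fun i =>
      (hF.1.mul (hmeas (b i)).aestronglyMeasurable).mul
        (hmeas' (b i)).aestronglyMeasurable
    have hlint : ∑' i, ∫⁻ x, ‖F x * ⟪φ x, b i⟫ * ⟪b i, φ x⟫‖₊ ∂μ ≠ ⊤ := by
      rw [← lintegral_tsum fun i => (hfi_meas i).aemeasurable.nnnorm.coe_nnreal_ennreal]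
      have hpt : ∀ᵐ x ∂μ,
          ∑' i, (‖F x * ⟪φ x, b i⟫ * ⟪b i, φ x⟫‖₊ : ENNReal)
            ≤ ENNReal.ofReal (c₁ ^ 2) * ‖F x‖₊ := by
        filter_upwards [hbdd2] with x hx
        have heq : ∀ i : ι, (‖F x * ⟪φ x, b i⟫ * ⟪b i, φ x⟫‖₊ : ENNReal)
            = ENNReal.ofReal (‖F x‖ * ‖⟪b i, φ x⟫‖ ^ 2) := by
          intro i
          rw [← enorm_eq_nnnorm, ← ofReal_norm]
          congr 1
          rw [mul_assoc, hz x i]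
          simp [norm_mul, abs_of_nonneg (norm_nonneg _)]
        calc ∑' i, (‖F x * ⟪φ x, b i⟫ * ⟪b i, φ x⟫‖₊ : ENNReal)
            = ∑' i, ENNReal.ofReal (‖F x‖ * ‖⟪b i, φ x⟫‖ ^ 2) := by
              exact tsum_congr heq
          _ = ENNReal.ofReal (∑' i, ‖F x‖ * ‖⟪b i, φ x⟫‖ ^ 2) :=
              (ENNReal.ofReal_tsum_of_nonneg
                (fun i => mul_nonneg (norm_nonneg _) (sq_nonneg _))
                ((hParseval x).summable.mul_left _)).symm
          _ = ENNReal.ofReal (‖F x‖ * ‖φ x‖ ^ 2) := by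
              rw [tsum_mul_left, (hParseval x).tsum_eq]
          _ ≤ ENNReal.ofReal (c₁ ^ 2 * ‖F x‖) := by
              apply ENNReal.ofReal_le_ofReal
              calc ‖F x‖ * ‖φ x‖ ^ 2 ≤ ‖F x‖ * c₁ ^ 2 :=
                    mul_le_mul_of_nonneg_left hx (norm_nonneg _)
                _ = c₁ ^ 2 * ‖F x‖ := mul_comm _ _
          _ = ENNReal.ofReal (c₁ ^ 2) * ‖F x‖₊ := by
              rw [ENNReal.ofReal_mul (sq_nonneg _), ofReal_norm, enorm_eq_nnnorm]
      have h1 : ∫⁻ x, ∑' i, (‖F x * ⟪φ x, b i⟫ * ⟪b i, φ x⟫‖₊ : ENNReal) ∂μ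
          ≤ ENNReal.ofReal (c₁ ^ 2) * ∫⁻ x, ‖F x‖₊ ∂μ :=
        (lintegral_mono_ae hpt).trans_eq (lintegral_const_mul'' _ hF.1.enorm)
      exact ne_top_of_le_ne_top
        (ENNReal.mul_ne_top ENNReal.ofReal_ne_top hF.2.ne) h1
    calc ∑' i, ⟪b i, L (b i)⟫
        = ∑' i, ∫ x, F x * ⟪φ x, b i⟫ * ⟪b i, φ x⟫ ∂μ := by
          exact tsum_congr fun i => hL (b i) (b i)
      _ = ∫ x, ∑' i, F x * ⟪φ x, b i⟫ * ⟪b i, φ x⟫ ∂μ :=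
          (integral_tsum hfi_meas hlint).symm
      _ = ∫ x, F x * (‖φ x‖ : ℂ) ^ 2 ∂μ := by
          refine integral_congr_ae (Filter.Eventually.of_forall fun x => ?_)
          simp_rw [mul_assoc]
          rw [tsum_mul_left, b.tsum_inner_mul_inner (φ x) (φ x),
            inner_self_eq_norm_sq_to_K]
          norm_cast
end

section
/- Under the same hypotheses (weak measurability of x ↦ φ_x and ‖φ_x‖ ≤ c₁ a.e.), for F ∈ L¹(X) the Hilbert-Schmidt norm of L_F satisfies ‖L_F‖²_{HS} = ∫_{X×X} F(x) |⟨φ_x, φ_y⟩|² conj(F(y)) dμ(x) dμ(y). -/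
open MeasureTheory

local notation "⟪" x ", " y "⟫" => @inner ℂ _ _ x y

open ComplexConjugate
open scoped ENNReal NNReal

/-- Bessel's inequality in `ℝ≥0∞`. -/
lemma bessel_ennreal {H : Type*} [NormedAddCommGroup H] [InnerProductSpace ℂ H]
    {ι : Type*} {v : ι → H} (hv : Orthonormal ℂ v) (x : H) :
    ∑' i, (‖⟪v i, x⟫‖₊ : ℝ≥0∞) ^ 2 ≤ (‖x‖₊ : ℝ≥0∞) ^ 2 := by
  rw [ENNReal.tsum_eq_iSup_sum]
  refine iSup_le fun s => ?_
  have h := hv.sum_inner_products_le (s := s) x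
  have h2 : (∑ i ∈ s, ‖⟪v i, x⟫‖₊ ^ 2 : ℝ≥0) ≤ ‖x‖₊ ^ 2 := by
    rw [← NNReal.coe_le_coe]
    push_cast
    exact h
  calc ∑ i ∈ s, (‖⟪v i, x⟫‖₊ : ℝ≥0∞) ^ 2
      = ((∑ i ∈ s, ‖⟪v i, x⟫‖₊ ^ 2 : ℝ≥0) : ℝ≥0∞) := by push_cast; rfl
    _ ≤ ((‖x‖₊ ^ 2 : ℝ≥0) : ℝ≥0∞) := by exact_mod_cast h2
    _ = (‖x‖₊ : ℝ≥0∞) ^ 2 := by push_cast; rfl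

lemma nnnorm_inner_symm' {H : Type*} [NormedAddCommGroup H] [InnerProductSpace ℂ H]
    (x y : H) : ‖⟪x, y⟫‖₊ = ‖⟪y, x⟫‖₊ := by
  ext
  simpa using norm_inner_symm (𝕜 := ℂ) x y

set_option maxHeartbeats 1000000 in
theorem localization_op_hilbertSchmidt_norm_formula
    {X : Type*} [MeasurableSpace X] (μ : Measure X) [SigmaFinite μ]
    {H : Type*} [NormedAddCommGroup H] [InnerProductSpace ℂ H] [CompleteSpace H]
    [TopologicalSpace.SeparableSpace H]
    (φ : X → H) (c₁ : ℝ)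
    (hmeas : ∀ f : H, Measurable fun x => ⟪φ x, f⟫)
    (hbdd : ∀ᵐ x ∂μ, ‖φ x‖ ≤ c₁)
    (F : X → ℂ) (hF : Integrable F μ)
    (L : H →L[ℂ] H)
    (hL : ∀ f g : H, ⟪g, L f⟫ = ∫ x, F x * ⟪φ x, f⟫ * ⟪g, φ x⟫ ∂μ) :
    ∀ {ι : Type} [Countable ι] (b : HilbertBasis ι ℂ H),
      ((∑' i, ‖L (b i)‖ ^ 2 : ℝ) : ℂ)
        = ∫ x, ∫ y, F x * (‖⟪φ x, φ y⟫‖ : ℂ) ^ 2 * (starRingEnd ℂ) (F y) ∂μ ∂μ := by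
  intro ι _ b
  classical
  -- the elementary kernels
  set w : ι × ι → X → ℂ := fun p x => F x * ⟪φ x, b p.1⟫ * conj ⟪φ x, b p.2⟫ with hw
  set f : ι × ι → X × X → ℂ := fun p z => w p z.1 * conj (w p z.2) with hfdef
  set G : X × X → ℂ :=
    fun z => (F z.1 * conj (F z.2)) * (⟪φ z.1, φ z.2⟫ * ⟪φ z.2, φ z.1⟫) with hGdef
  -- measurability
  have hwm : ∀ p : ι × ι, AEStronglyMeasurable (w p) μ := by
    intro p
    exact (hF.aestronglyMeasurable.mul (hmeas (b p.1)).aestronglyMeasurable).mul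
      (RCLike.continuous_conj.comp_aestronglyMeasurable
        (hmeas (b p.2)).aestronglyMeasurable)
  have hfm : ∀ p : ι × ι, AEStronglyMeasurable (f p) (μ.prod μ) := by
    intro p
    exact (hwm p).comp_fst.mul
      (RCLike.continuous_conj.comp_aestronglyMeasurable (hwm p).comp_snd)
  -- value of the integral of each elementary kernel
  have hfint : ∀ p : ι × ι,
      ∫ z, f p z ∂(μ.prod μ) = ((‖⟪b p.2, L (b p.1)⟫‖ ^ 2 : ℝ) : ℂ) := by
    intro p
    have h1 : ∫ x, w p x ∂μ = ⟪b p.2, L (b p.1)⟫ := by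
      rw [hL (b p.1) (b p.2)]
      refine integral_congr_ae (Filter.Eventually.of_forall fun x => ?_)
      simp only [hw, inner_conj_symm]
    calc ∫ z, f p z ∂(μ.prod μ)
        = (∫ x, w p x ∂μ) * ∫ y, conj (w p y) ∂μ := by
          simp only [hfdef]
          exact integral_prod_mul (f := w p) (g := fun y => conj (w p y))
      _ = (∫ x, w p x ∂μ) * conj (∫ y, w p y ∂μ) := by rw [integral_conj]
      _ = ⟪b p.2, L (b p.1)⟫ * conj ⟪b p.2, L (b p.1)⟫ := by rw [h1]
      _ = ((‖⟪b p.2, L (b p.1)⟫‖ ^ 2 : ℝ) : ℂ) := by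
          rw [RCLike.mul_conj]; norm_cast
  -- norm-summability of the Parseval coefficients
  have hptA : ∀ x y : X, Summable fun i : ι => ‖⟪φ x, b i⟫ * ⟪b i, φ y⟫‖ := by
    intro x y
    have h1 := b.orthonormal.inner_products_summable (φ x)
    have h2 := b.orthonormal.inner_products_summable (φ y)
    refine Summable.of_nonneg_of_le (fun i => norm_nonneg _) (fun i => ?_) (h1.add h2)
    rw [norm_mul]
    have e1 : ‖⟪φ x, b i⟫‖ = ‖⟪b i, φ x⟫‖ := norm_inner_symm _ _
    have e2 : ‖⟪b i, φ y⟫‖ = ‖⟪b i, φ y⟫‖ := rfl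
    rw [e1]
    nlinarith [norm_nonneg (⟪b i, φ x⟫), norm_nonneg (⟪b i, φ y⟫),
      sq_nonneg (‖⟪b i, φ x⟫‖ - ‖⟪b i, φ y⟫‖)]
  -- pointwise summation of the elementary kernels
  have hhas : ∀ z : X × X, HasSum (fun p : ι × ι => f p z) (G z) := by
    rintro ⟨x, y⟩
    have hA := hptA x y
    have hB := hptA y x
    have hSAB : Summable (fun p : ι × ι =>
        (⟪φ x, b p.1⟫ * ⟪b p.1, φ y⟫) * (⟪φ y, b p.2⟫ * ⟪b p.2, φ x⟫)) :=
      summable_mul_of_summable_norm (f := fun i : ι => ⟪φ x, b i⟫ * ⟪b i, φ y⟫)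
        (g := fun i : ι => ⟪φ y, b i⟫ * ⟪b i, φ x⟫) hA hB
    have htsum : ∑' p : ι × ι,
        (⟪φ x, b p.1⟫ * ⟪b p.1, φ y⟫) * (⟪φ y, b p.2⟫ * ⟪b p.2, φ x⟫)
        = ⟪φ x, φ y⟫ * ⟪φ y, φ x⟫ := by
      rw [← tsum_mul_tsum_of_summable_norm (f := fun i : ι => ⟪φ x, b i⟫ * ⟪b i, φ y⟫)
        (g := fun i : ι => ⟪φ y, b i⟫ * ⟪b i, φ x⟫) hA hB, b.tsum_inner_mul_inner,
        b.tsum_inner_mul_inner]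
    have h0 : HasSum (fun p : ι × ι => (F x * conj (F y)) *
        ((⟪φ x, b p.1⟫ * ⟪b p.1, φ y⟫) * (⟪φ y, b p.2⟫ * ⟪b p.2, φ x⟫)))
        ((F x * conj (F y)) * (⟪φ x, φ y⟫ * ⟪φ y, φ x⟫)) := by
      rw [← htsum]
      exact hSAB.hasSum.mul_left _
    have hfe : (fun p : ι × ι => f p (x, y)) = fun p : ι × ι => (F x * conj (F y)) *
        ((⟪φ x, b p.1⟫ * ⟪b p.1, φ y⟫) * (⟪φ y, b p.2⟫ * ⟪b p.2, φ x⟫)) := by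
      funext p
      simp only [hfdef, hw, map_mul, Complex.conj_conj, inner_conj_symm]
      ring
    simpa only [hGdef, hfe] using h0
  -- the a.e. bound on the product space
  have hbddz : ∀ᵐ z ∂(μ.prod μ), ‖φ z.1‖ ≤ c₁ ∧ ‖φ z.2‖ ≤ c₁ := by
    have h1 : ∀ᵐ z ∂(μ.prod μ), ‖φ z.1‖ ≤ c₁ :=
      (Measure.quasiMeasurePreserving_fst.tendsto_ae).eventually hbdd
    have h2 : ∀ᵐ z ∂(μ.prod μ), ‖φ z.2‖ ≤ c₁ :=
      (Measure.quasiMeasurePreserving_snd.tendsto_ae).eventually hbdd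
    exact h1.and h2
  -- the key ENNReal bound
  set D : ℝ≥0∞ := (‖c₁‖₊ : ℝ≥0∞) ^ 2 with hD
  have hφc : ∀ x : X, ‖φ x‖ ≤ c₁ → ((‖φ x‖₊ : ℝ≥0∞) ^ 2 ≤ D) := by
    intro x hx
    rw [hD]
    have : ‖φ x‖₊ ≤ ‖c₁‖₊ := by
      rw [← NNReal.coe_le_coe]
      simpa [Real.norm_eq_abs] using hx.trans (le_abs_self c₁)
    exact pow_le_pow_left' (by exact_mod_cast this) 2
  have key_bound : ∀ x y : X, ‖φ x‖ ≤ c₁ → ‖φ y‖ ≤ c₁ →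
      ∑' p : ι × ι, (‖f p (x, y)‖₊ : ℝ≥0∞)
        ≤ (‖F x‖₊ : ℝ≥0∞) * (‖F y‖₊ : ℝ≥0∞) * ((2 * D) * (2 * D)) := by
    intro x y hx hy
    set a : ι → ℝ≥0∞ := fun i => (‖⟪φ x, b i⟫‖₊ : ℝ≥0∞) with ha
    set c : ι → ℝ≥0∞ := fun i => (‖⟪φ y, b i⟫‖₊ : ℝ≥0∞) with hc
    have hterm : ∀ p : ι × ι, (‖f p (x, y)‖₊ : ℝ≥0∞)
        = ((‖F x‖₊ : ℝ≥0∞) * (‖F y‖₊ : ℝ≥0∞)) * ((a p.1 * c p.1) * (a p.2 * c p.2)) := by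
      intro p
      have : ‖f p (x, y)‖₊
          = ((‖F x‖₊ * ‖F y‖₊)) * ((‖⟪φ x, b p.1⟫‖₊ * ‖⟪φ y, b p.1⟫‖₊)
            * (‖⟪φ x, b p.2⟫‖₊ * ‖⟪φ y, b p.2⟫‖₊)) := by
        simp only [hfdef, hw, nnnorm_mul, RCLike.nnnorm_conj]
        ring
      rw [this]
      push_cast
      ring
    have hsum_ac : ∑' i, a i * c i ≤ 2 * D := by
      have hstep : ∀ i, a i * c i ≤ a i ^ 2 + c i ^ 2 := by
        intro i
        rcases le_total (a i) (c i) with h | h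
        · calc a i * c i ≤ c i * c i := mul_le_mul_left h _
            _ = c i ^ 2 := (sq (c i)).symm
            _ ≤ a i ^ 2 + c i ^ 2 := le_add_self
        · calc a i * c i ≤ a i * a i := mul_le_mul_right h _
            _ = a i ^ 2 := (sq (a i)).symm
            _ ≤ a i ^ 2 + c i ^ 2 := le_self_add
      calc ∑' i, a i * c i ≤ ∑' i, (a i ^ 2 + c i ^ 2) := ENNReal.tsum_le_tsum hstep
        _ = (∑' i, a i ^ 2) + ∑' i, c i ^ 2 := ENNReal.tsum_add
        _ ≤ D + D := by
            refine add_le_add ?_ ?_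
            · refine le_trans ?_ (hφc x hx)
              refine le_trans (le_of_eq ?_) (bessel_ennreal b.orthonormal (φ x))
              congr 1
              funext i
              rw [ha]
              rw [nnnorm_inner_symm']
            · refine le_trans ?_ (hφc y hy)
              refine le_trans (le_of_eq ?_) (bessel_ennreal b.orthonormal (φ y))
              congr 1
              funext i
              rw [hc]
              rw [nnnorm_inner_symm']
        _ = 2 * D := by ring
    calc ∑' p : ι × ι, (‖f p (x, y)‖₊ : ℝ≥0∞)
        = ((‖F x‖₊ : ℝ≥0∞) * (‖F y‖₊ : ℝ≥0∞))
            * ∑' p : ι × ι, ((a p.1 * c p.1) * (a p.2 * c p.2)) := by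
          rw [← ENNReal.tsum_mul_left]
          exact tsum_congr hterm
      _ = ((‖F x‖₊ : ℝ≥0∞) * (‖F y‖₊ : ℝ≥0∞))
            * ((∑' i, a i * c i) * (∑' i, a i * c i)) := by
          congr 1
          rw [ENNReal.tsum_prod']
          simp_rw [ENNReal.tsum_mul_left, ENNReal.tsum_mul_right]
      _ ≤ ((‖F x‖₊ : ℝ≥0∞) * (‖F y‖₊ : ℝ≥0∞)) * ((2 * D) * (2 * D)) := by
          refine mul_le_mul_right (mul_le_mul' hsum_ac hsum_ac) _
      _ = (‖F x‖₊ : ℝ≥0∞) * (‖F y‖₊ : ℝ≥0∞) * ((2 * D) * (2 * D)) := by ring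
  -- finiteness of the total mass
  have hDfin : (2 * D) * (2 * D) ≠ ∞ := by
    have h1 : (‖c₁‖₊ : ℝ≥0∞) ^ 2 ≠ ⊤ := ENNReal.pow_ne_top ENNReal.coe_ne_top
    rw [hD]
    exact ENNReal.mul_ne_top (ENNReal.mul_ne_top ENNReal.ofNat_ne_top h1)
      (ENNReal.mul_ne_top ENNReal.ofNat_ne_top h1)
  have hf' : ∑' p : ι × ι, ∫⁻ z, ‖f p z‖₊ ∂(μ.prod μ) ≠ ∞ := by
    rw [← lintegral_tsum fun p => (hfm p).nnnorm.aemeasurable.coe_nnreal_ennreal]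
    have hle : ∫⁻ z, ∑' p : ι × ι, (‖f p z‖₊ : ℝ≥0∞) ∂(μ.prod μ)
        ≤ ∫⁻ z, ((2 * D) * (2 * D)) * ((‖F z.1‖₊ : ℝ≥0∞) * (‖F z.2‖₊ : ℝ≥0∞)) ∂(μ.prod μ) := by
      refine lintegral_mono_ae (hbddz.mono fun z hz => ?_)
      calc ∑' p : ι × ι, (‖f p z‖₊ : ℝ≥0∞)
          ≤ (‖F z.1‖₊ : ℝ≥0∞) * (‖F z.2‖₊ : ℝ≥0∞) * ((2 * D) * (2 * D)) :=
            key_bound z.1 z.2 hz.1 hz.2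
        _ = ((2 * D) * (2 * D)) * ((‖F z.1‖₊ : ℝ≥0∞) * (‖F z.2‖₊ : ℝ≥0∞)) := by ring
    refine (hle.trans_lt ?_).ne
    rw [lintegral_const_mul' _ _ hDfin]
    have hprod : ∫⁻ z, ((‖F z.1‖₊ : ℝ≥0∞) * (‖F z.2‖₊ : ℝ≥0∞)) ∂(μ.prod μ)
        = (∫⁻ x, (‖F x‖₊ : ℝ≥0∞) ∂μ) * ∫⁻ y, (‖F y‖₊ : ℝ≥0∞) ∂μ :=
      lintegral_prod_mul hF.aestronglyMeasurable.nnnorm.aemeasurable.coe_nnreal_ennreal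
        hF.aestronglyMeasurable.nnnorm.aemeasurable.coe_nnreal_ennreal
    rw [hprod]
    exact ENNReal.mul_lt_top hDfin.lt_top (ENNReal.mul_lt_top hF.2 hF.2)
  -- summability of the integrals
  have hsummable : Summable fun p : ι × ι => ∫ z, f p z ∂(μ.prod μ) := by
    refine Summable.of_norm ?_
    refine Summable.of_nonneg_of_le (fun p => norm_nonneg _) (fun p => ?_)
      (ENNReal.summable_toReal hf')
    calc ‖∫ z, f p z ∂(μ.prod μ)‖
        ≤ (∫⁻ z, ENNReal.ofReal ‖f p z‖ ∂(μ.prod μ)).toReal :=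
          norm_integral_le_lintegral_norm _
      _ = (∫⁻ z, (‖f p z‖₊ : ℝ≥0∞) ∂(μ.prod μ)).toReal := by
          congr 1
          exact lintegral_congr fun z => ofReal_norm _
  -- measurability of the limit kernel
  have hGm : AEStronglyMeasurable G (μ.prod μ) := by
    exact aestronglyMeasurable_of_tendsto_ae (Filter.atTop : Filter (Finset (ι × ι)))
      (fun s => s.aestronglyMeasurable_sum fun p _ => hfm p)
      (Filter.Eventually.of_forall fun z => by simp only [Finset.sum_apply]; exact hhas z)
  -- integrability of the limit kernel
  have hGint : Integrable G (μ.prod μ) := by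
    have hmaj : Integrable (fun z : X × X => (‖c₁‖ ^ 2 * ‖c₁‖ ^ 2) * (‖F z.1‖ * ‖F z.2‖))
        (μ.prod μ) := (hF.norm.mul_prod hF.norm).const_mul _
    refine hmaj.mono' hGm ?_
    filter_upwards [hbddz] with z hz
    obtain ⟨hz1, hz2⟩ := hz
    have hc1 : ‖φ z.1‖ ≤ ‖c₁‖ := hz1.trans (le_abs_self c₁)
    have hc2 : ‖φ z.2‖ ≤ ‖c₁‖ := hz2.trans (le_abs_self c₁)
    have h12 : ‖⟪φ z.1, φ z.2⟫‖ ≤ ‖c₁‖ * ‖c₁‖ :=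
      (norm_inner_le_norm _ _).trans
        (mul_le_mul hc1 hc2 (norm_nonneg _) (norm_nonneg _))
    have h21 : ‖⟪φ z.2, φ z.1⟫‖ ≤ ‖c₁‖ * ‖c₁‖ :=
      (norm_inner_le_norm _ _).trans
        (mul_le_mul hc2 hc1 (norm_nonneg _) (norm_nonneg _))
    have hGnorm : ‖G z‖ = (‖F z.1‖ * ‖F z.2‖) * (‖⟪φ z.1, φ z.2⟫‖ * ‖⟪φ z.2, φ z.1⟫‖) := by
      simp only [hGdef, norm_mul, RCLike.norm_conj]
    rw [hGnorm]
    have hnn : (0:ℝ) ≤ ‖F z.1‖ * ‖F z.2‖ := mul_nonneg (norm_nonneg _) (norm_nonneg _)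
    calc (‖F z.1‖ * ‖F z.2‖) * (‖⟪φ z.1, φ z.2⟫‖ * ‖⟪φ z.2, φ z.1⟫‖)
        ≤ (‖F z.1‖ * ‖F z.2‖) * ((‖c₁‖ * ‖c₁‖) * (‖c₁‖ * ‖c₁‖)) := by
          refine mul_le_mul_of_nonneg_left ?_ hnn
          exact mul_le_mul h12 h21 (norm_nonneg _)
            (mul_nonneg (norm_nonneg _) (norm_nonneg _))
      _ = (‖c₁‖ ^ 2 * ‖c₁‖ ^ 2) * (‖F z.1‖ * ‖F z.2‖) := by ring
  -- Step 1 : the left-hand side as a double sum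
  have step1 : ((∑' i, ‖L (b i)‖ ^ 2 : ℝ) : ℂ)
      = ∑' i : ι, ∑' j : ι, ((‖⟪b j, L (b i)⟫‖ ^ 2 : ℝ) : ℂ) := by
    rw [Complex.ofReal_tsum]
    refine tsum_congr fun i => ?_
    have h1 : HasSum (fun j : ι => ⟪L (b i), b j⟫ * ⟪b j, L (b i)⟫)
        ⟪L (b i), L (b i)⟫ := b.hasSum_inner_mul_inner _ _
    have h2 : ∀ j : ι, ⟪L (b i), b j⟫ * ⟪b j, L (b i)⟫
        = ((‖⟪b j, L (b i)⟫‖ ^ 2 : ℝ) : ℂ) := by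
      intro j
      calc ⟪L (b i), b j⟫ * ⟪b j, L (b i)⟫
          = conj ⟪b j, L (b i)⟫ * ⟪b j, L (b i)⟫ := by rw [inner_conj_symm]
        _ = ((‖⟪b j, L (b i)⟫‖ ^ 2 : ℝ) : ℂ) := by rw [RCLike.conj_mul]; norm_cast
    have h3 : ⟪L (b i), L (b i)⟫ = ((‖L (b i)‖ ^ 2 : ℝ) : ℂ) := by
      rw [inner_self_eq_norm_sq_to_K]; norm_cast
    calc ((‖L (b i)‖ ^ 2 : ℝ) : ℂ) = ⟪L (b i), L (b i)⟫ := h3.symm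
      _ = ∑' j : ι, ⟪L (b i), b j⟫ * ⟪b j, L (b i)⟫ := h1.tsum_eq.symm
      _ = ∑' j : ι, ((‖⟪b j, L (b i)⟫‖ ^ 2 : ℝ) : ℂ) := tsum_congr h2
  -- Step 2 : assemble everything
  rw [step1]
  have step2 : ∑' i : ι, ∑' j : ι, ((‖⟪b j, L (b i)⟫‖ ^ 2 : ℝ) : ℂ)
      = ∑' p : ι × ι, ∫ z, f p z ∂(μ.prod μ) := by
    rw [Summable.tsum_prod hsummable]
    refine tsum_congr fun i => tsum_congr fun j => ?_
    exact (hfint (i, j)).symm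
  rw [step2, ← integral_tsum hfm hf']
  have step5 : ∫ z, ∑' p : ι × ι, f p z ∂(μ.prod μ) = ∫ z, G z ∂(μ.prod μ) := by
    refine integral_congr_ae (Filter.Eventually.of_forall fun z => ?_)
    exact (hhas z).tsum_eq
  rw [step5, integral_prod _ hGint]
  refine integral_congr_ae (Filter.Eventually.of_forall fun x => ?_)
  refine integral_congr_ae (Filter.Eventually.of_forall fun y => ?_)
  have hsymm : ⟪φ y, φ x⟫ = conj ⟪φ x, φ y⟫ := (inner_conj_symm _ _).symm
  have hmc : ⟪φ x, φ y⟫ * conj ⟪φ x, φ y⟫ = ((‖⟪φ x, φ y⟫‖ ^ 2 : ℝ) : ℂ) := by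
    rw [RCLike.mul_conj]; norm_cast
  simp only [hGdef, hsymm, hmc]
  push_cast
  ring
end

section
/- It holds that sup{‖L_F‖_{HS}/‖F‖₂ : F ∈ L²(ℝ^{2d}), F ≠ 0} = 1; in particular, taking F = χ_{B_r}, the ratio ‖L_{χ_{B_r}}‖_{HS}/‖χ_{B_r}‖₂ tends to 1 as r → +∞. -/
open MeasureTheory Filter

/-- The Hilbert-Schmidt norm of the Gaussian time-frequency localization operator `L_F`. -/
noncomputable def hsNorm {n : ℕ} (F : EuclideanSpace ℝ (Fin n) → ℂ) : ℝ :=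
  Real.sqrt (∫ z, ∫ w, F z * Real.exp (-Real.pi * dist z w ^ 2) *
    (starRingEnd ℂ) (F w) : ℂ).re

open Metric Real Set
open scoped ENNReal Topology

namespace HSAux

noncomputable section

variable {n : ℕ}

abbrev Esp (n : ℕ) := EuclideanSpace ℝ (Fin n)

/-- Gaussian function. -/
def gauss (n : ℕ) (x : Esp n) : ℝ := rexp (-π * ‖x‖ ^ 2)

lemma gauss_nonneg (x : Esp n) : 0 ≤ gauss n x := (Real.exp_pos _).le

lemma continuous_gauss : Continuous (gauss n) := by
  unfold gauss; fun_prop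

lemma integrable_gauss : Integrable (gauss n) volume := by
  have h := (GaussianFourier.integrable_cexp_neg_mul_sq_norm_add (V := Esp n)
      (b := (π : ℂ)) (by simpa using pi_pos) 0 (0 : Esp n)).norm
  refine h.congr (Filter.Eventually.of_forall fun x => ?_)
  have h2 : ((-(π:ℂ) * (‖x‖:ℂ) ^ 2 + 0 * ((inner ℝ (0 : Esp n) x : ℝ) : ℂ))).re
      = -π * ‖x‖ ^ 2 := by
    simp [← Complex.ofReal_pow]
  simp only [Complex.norm_exp, gauss, h2]

lemma integral_gauss : ∫ x, gauss n x = 1 := by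
  rw [show (gauss n) = fun x : Esp n => rexp (-π * ‖x‖ ^ 2) from rfl,
    GaussianFourier.integral_rexp_neg_mul_sq_norm pi_pos, div_self (ne_of_gt pi_pos),
    Real.one_rpow]

lemma integrable_gauss_sub (z : Esp n) :
    Integrable (fun w => gauss n (z - w)) volume :=
  integrable_gauss.comp_sub_left z

lemma integral_gauss_sub (z : Esp n) : ∫ w, gauss n (z - w) = 1 := by
  rw [integral_sub_left_eq_self (gauss n) volume z, integral_gauss]

lemma gauss_dist (z w : Esp n) : rexp (-π * dist z w ^ 2) = gauss n (z - w) := by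
  rw [gauss, dist_eq_norm]

end

end HSAux
namespace HSAux

noncomputable section

variable {n : ℕ}

lemma memL2_sq_integrable {F : Esp n → ℂ} (hF : MemLp F 2 volume) :
    Integrable (fun z => ‖F z‖ ^ 2) volume := by
  have h := hF.integrable_norm_rpow (by norm_num) (by norm_num)
  refine h.congr (Filter.Eventually.of_forall fun x => ?_)
  norm_num [Real.rpow_natCast]

lemma integrable_D1 {F : Esp n → ℂ} (hF : MemLp F 2 volume) :
    Integrable (fun p : Esp n × Esp n => ‖F p.1‖ ^ 2 * gauss n (p.1 - p.2))
      (volume.prod volume) := by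
  have hmes : AEStronglyMeasurable
      (fun p : Esp n × Esp n => ‖F p.1‖ ^ 2 * gauss n (p.1 - p.2))
      (volume.prod volume) := by
    refine AEStronglyMeasurable.mul ?_ ?_
    · exact ((hF.aestronglyMeasurable.norm.pow 2).comp_fst)
    · exact (continuous_gauss.comp (continuous_fst.sub continuous_snd)).aestronglyMeasurable
  rw [integrable_prod_iff hmes]
  constructor
  · refine Filter.Eventually.of_forall fun z => ?_
    simpa using (integrable_gauss_sub z).const_mul (‖F z‖ ^ 2)
  · have heq : (fun z => ∫ w, ‖‖F z‖ ^ 2 * gauss n (z - w)‖)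
        = fun z => ‖F z‖ ^ 2 := by
      funext z
      have : ∀ w : Esp n, ‖‖F z‖ ^ 2 * gauss n (z - w)‖ = ‖F z‖ ^ 2 * gauss n (z - w) := by
        intro w
        rw [Real.norm_eq_abs, abs_of_nonneg (mul_nonneg (by positivity) (gauss_nonneg _))]
      simp_rw [this, integral_const_mul, integral_gauss_sub z, mul_one]
    rw [heq]
    exact memL2_sq_integrable hF

lemma integrable_D2 {F : Esp n → ℂ} (hF : MemLp F 2 volume) :
    Integrable (fun p : Esp n × Esp n => ‖F p.2‖ ^ 2 * gauss n (p.1 - p.2))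
      (volume.prod volume) := by
  have h := (integrable_D1 hF).swap
  refine h.congr (Filter.Eventually.of_forall fun p => ?_)
  simp only [Function.comp, Prod.fst_swap, Prod.snd_swap]
  congr 1
  rw [gauss, gauss, norm_sub_rev]

lemma integrable_G {F : Esp n → ℂ} (hF : MemLp F 2 volume) :
    Integrable (fun p : Esp n × Esp n =>
      F p.1 * (rexp (-π * dist p.1 p.2 ^ 2) : ℂ) * (starRingEnd ℂ) (F p.2))
      (volume.prod volume) := by
  have hD : Integrable (fun p : Esp n × Esp n =>
      (‖F p.1‖ ^ 2 * gauss n (p.1 - p.2) + ‖F p.2‖ ^ 2 * gauss n (p.1 - p.2)) / 2)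
      (volume.prod volume) := ((integrable_D1 hF).add (integrable_D2 hF)).div_const 2
  have hmes : AEStronglyMeasurable (fun p : Esp n × Esp n =>
      F p.1 * (rexp (-π * dist p.1 p.2 ^ 2) : ℂ) * (starRingEnd ℂ) (F p.2))
      (volume.prod volume) := by
    refine (AEStronglyMeasurable.mul (hF.aestronglyMeasurable.comp_fst.mul ?_)
      ((Complex.continuous_conj.comp_aestronglyMeasurable hF.aestronglyMeasurable).comp_snd))
    refine Continuous.aestronglyMeasurable ?_
    exact Complex.continuous_ofReal.comp
      ((Real.continuous_exp.comp (continuous_const.mul ((continuous_fst.dist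
        continuous_snd).pow 2))))
  refine hD.mono' hmes (Filter.Eventually.of_forall fun p => ?_)
  have hg : 0 ≤ gauss n (p.1 - p.2) := gauss_nonneg _
  have hb : ‖F p.1‖ * ‖F p.2‖ ≤ (‖F p.1‖ ^ 2 + ‖F p.2‖ ^ 2) / 2 := by
    nlinarith [sq_nonneg (‖F p.1‖ - ‖F p.2‖)]
  calc ‖F p.1 * (rexp (-π * dist p.1 p.2 ^ 2) : ℂ) * (starRingEnd ℂ) (F p.2)‖
      = ‖F p.1‖ * gauss n (p.1 - p.2) * ‖F p.2‖ := by
        rw [norm_mul, norm_mul, RingHomIsometric.norm_map]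
        congr 2
        rw [Complex.norm_real, Real.norm_eq_abs, abs_of_nonneg (Real.exp_pos _).le, gauss_dist]
    _ ≤ (‖F p.1‖ ^ 2 + ‖F p.2‖ ^ 2) / 2 * gauss n (p.1 - p.2) := by nlinarith
    _ = (‖F p.1‖ ^ 2 * gauss n (p.1 - p.2) + ‖F p.2‖ ^ 2 * gauss n (p.1 - p.2)) / 2 := by ring

end

end HSAux
namespace HSAux

noncomputable section

variable {n : ℕ}

lemma integral_D1 {F : Esp n → ℂ} (hF : MemLp F 2 volume) :
    ∫ p : Esp n × Esp n, ‖F p.1‖ ^ 2 * gauss n (p.1 - p.2) ∂(volume.prod volume)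
      = ∫ z, ‖F z‖ ^ 2 := by
  rw [MeasureTheory.integral_prod _ (integrable_D1 hF)]
  congr 1
  funext z
  simp only []
  rw [integral_const_mul, integral_gauss_sub z, mul_one]

lemma integral_D2 {F : Esp n → ℂ} (hF : MemLp F 2 volume) :
    ∫ p : Esp n × Esp n, ‖F p.2‖ ^ 2 * gauss n (p.1 - p.2) ∂(volume.prod volume)
      = ∫ z, ‖F z‖ ^ 2 := by
  rw [← MeasureTheory.integral_prod_swap]
  rw [← integral_D1 hF]
  congr 1
  funext p
  simp only [Prod.fst_swap, Prod.snd_swap]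
  congr 1
  rw [gauss, gauss, norm_sub_rev]

/-- The key upper bound. -/
lemma hsNorm_sq_le {F : Esp n → ℂ} (hF : MemLp F 2 volume) :
    (∫ z, ∫ w, F z * Real.exp (-Real.pi * dist z w ^ 2) *
      (starRingEnd ℂ) (F w) : ℂ).re ≤ ∫ z, ‖F z‖ ^ 2 := by
  have hG := integrable_G hF
  have h1 : (∫ z, ∫ w, F z * Real.exp (-Real.pi * dist z w ^ 2) *
      (starRingEnd ℂ) (F w) : ℂ)
      = ∫ p : Esp n × Esp n, F p.1 * (rexp (-π * dist p.1 p.2 ^ 2) : ℂ) *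
          (starRingEnd ℂ) (F p.2) ∂(volume.prod volume) :=
    (MeasureTheory.integral_integral (f := fun z w => F z *
      (rexp (-π * dist z w ^ 2) : ℂ) * (starRingEnd ℂ) (F w)) (μ := volume) (ν := volume)
      (by exact hG))
  rw [h1]
  calc (∫ p : Esp n × Esp n, F p.1 * (rexp (-π * dist p.1 p.2 ^ 2) : ℂ) *
          (starRingEnd ℂ) (F p.2) ∂(volume.prod volume)).re
      ≤ ‖∫ p : Esp n × Esp n, F p.1 * (rexp (-π * dist p.1 p.2 ^ 2) : ℂ) *
          (starRingEnd ℂ) (F p.2) ∂(volume.prod volume)‖ := Complex.re_le_norm _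
    _ ≤ ∫ p : Esp n × Esp n, ‖F p.1 * (rexp (-π * dist p.1 p.2 ^ 2) : ℂ) *
          (starRingEnd ℂ) (F p.2)‖ ∂(volume.prod volume) := norm_integral_le_integral_norm _
    _ ≤ ∫ p : Esp n × Esp n, (‖F p.1‖ ^ 2 * gauss n (p.1 - p.2)
          + ‖F p.2‖ ^ 2 * gauss n (p.1 - p.2)) / 2 ∂(volume.prod volume) := by
        refine integral_mono hG.norm
          (((integrable_D1 hF).add (integrable_D2 hF)).div_const 2) fun p => ?_
        have hb : ‖F p.1‖ * ‖F p.2‖ ≤ (‖F p.1‖ ^ 2 + ‖F p.2‖ ^ 2) / 2 := by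
          nlinarith [sq_nonneg (‖F p.1‖ - ‖F p.2‖)]
        have hg : 0 ≤ gauss n (p.1 - p.2) := gauss_nonneg _
        calc ‖F p.1 * (rexp (-π * dist p.1 p.2 ^ 2) : ℂ) * (starRingEnd ℂ) (F p.2)‖
            = ‖F p.1‖ * gauss n (p.1 - p.2) * ‖F p.2‖ := by
              rw [norm_mul, norm_mul, RingHomIsometric.norm_map]
              congr 2
              rw [Complex.norm_real, Real.norm_eq_abs,
                abs_of_nonneg (Real.exp_pos _).le, gauss_dist]
          _ ≤ (‖F p.1‖ ^ 2 + ‖F p.2‖ ^ 2) / 2 * gauss n (p.1 - p.2) := by nlinarith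
          _ = (‖F p.1‖ ^ 2 * gauss n (p.1 - p.2)
                + ‖F p.2‖ ^ 2 * gauss n (p.1 - p.2)) / 2 := by ring
    _ = ∫ z, ‖F z‖ ^ 2 := by
        rw [integral_div, integral_add (integrable_D1 hF) (integrable_D2 hF),
          integral_D1 hF, integral_D2 hF]
        ring

end

end HSAux
namespace HSAux

noncomputable section

variable {n : ℕ}

lemma eLpNorm_two_toReal {F : Esp n → ℂ} (hF : MemLp F 2 volume) :
    (eLpNorm F 2 volume).toReal = Real.sqrt (∫ z, ‖F z‖ ^ 2) := by
  rw [hF.eLpNorm_eq_integral_rpow_norm (by norm_num) (by norm_num)]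
  have hnn : 0 ≤ ∫ a, ‖F a‖ ^ ((2:ℝ≥0∞)).toReal :=
    integral_nonneg fun a => Real.rpow_nonneg (norm_nonneg _) _
  rw [ENNReal.toReal_ofReal (Real.rpow_nonneg hnn _)]
  have h2 : ((2:ℝ≥0∞)).toReal = 2 := by norm_num
  rw [Real.sqrt_eq_rpow]
  rw [h2]
  norm_num

/-- The ratio is at most one. -/
lemma ratio_le_one {F : Esp n → ℂ} (hF : MemLp F 2 volume) (hF0 : ¬ F =ᵐ[volume] 0) :
    Real.sqrt ((∫ z, ∫ w, F z * Real.exp (-Real.pi * dist z w ^ 2) *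
      (starRingEnd ℂ) (F w) : ℂ).re) / (eLpNorm F 2 volume).toReal ≤ 1 := by
  have hne : eLpNorm F 2 volume ≠ 0 := by
    intro h
    exact hF0 ((eLpNorm_eq_zero_iff hF.aestronglyMeasurable (by norm_num)).mp h)
  have hpos : 0 < (eLpNorm F 2 volume).toReal :=
    ENNReal.toReal_pos hne hF.2.ne
  rw [div_le_one hpos, eLpNorm_two_toReal hF]
  exact Real.sqrt_le_sqrt (hsNorm_sq_le hF)

end

end HSAux
namespace HSAux

noncomputable section

variable {n : ℕ}

/-- The double Gaussian integral over a ball. -/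
def Q (n : ℕ) (r : ℝ) : ℝ :=
  ∫ z in ball (0 : Esp n) r, ∫ w in ball (0 : Esp n) r, gauss n (z - w)

lemma hsNorm_indicator_integral (r : ℝ) :
    (∫ z, ∫ w, (ball (0 : Esp n) r).indicator (fun _ => (1:ℂ)) z *
        Real.exp (-Real.pi * dist z w ^ 2) *
        (starRingEnd ℂ) ((ball (0 : Esp n) r).indicator (fun _ => (1:ℂ)) w) : ℂ).re
      = Q n r := by
  have h1 : ∀ z : Esp n, (∫ w, (ball (0 : Esp n) r).indicator (fun _ => (1:ℂ)) z *
        Real.exp (-Real.pi * dist z w ^ 2) *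
        (starRingEnd ℂ) ((ball (0 : Esp n) r).indicator (fun _ => (1:ℂ)) w))
      = (ball (0 : Esp n) r).indicator
          (fun z => ((∫ w in ball (0 : Esp n) r, gauss n (z - w) : ℝ) : ℂ)) z := by
    intro z
    by_cases hz : z ∈ ball (0 : Esp n) r
    · have h2 : ∀ w : Esp n, (ball (0 : Esp n) r).indicator (fun _ => (1:ℂ)) z *
          Real.exp (-Real.pi * dist z w ^ 2) *
          (starRingEnd ℂ) ((ball (0 : Esp n) r).indicator (fun _ => (1:ℂ)) w)
          = (ball (0 : Esp n) r).indicator (fun w => ((gauss n (z - w) : ℝ) : ℂ)) w := by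
        intro w
        by_cases hw : w ∈ ball (0 : Esp n) r
        · simp only [Set.indicator_of_mem hz, Set.indicator_of_mem hw, map_one, one_mul,
            mul_one, gauss_dist]
        · simp [Set.indicator_of_mem hz, Set.indicator_of_notMem hw]
      rw [integral_congr_ae (Filter.Eventually.of_forall h2),
        integral_indicator measurableSet_ball, Set.indicator_of_mem hz]
      exact integral_ofReal
    · simp [Set.indicator_of_notMem hz]
  calc (∫ z, ∫ w, (ball (0 : Esp n) r).indicator (fun _ => (1:ℂ)) z *
        Real.exp (-Real.pi * dist z w ^ 2) *
        (starRingEnd ℂ) ((ball (0 : Esp n) r).indicator (fun _ => (1:ℂ)) w) : ℂ).re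
      = (∫ z, (ball (0 : Esp n) r).indicator
          (fun z => ((∫ w in ball (0 : Esp n) r, gauss n (z - w) : ℝ) : ℂ)) z).re := by
        rw [integral_congr_ae (Filter.Eventually.of_forall h1)]
    _ = (((∫ z in ball (0 : Esp n) r, ∫ w in ball (0 : Esp n) r, gauss n (z - w) : ℝ)) : ℂ).re := by
        rw [integral_indicator measurableSet_ball]
        congr 1
        exact integral_ofReal
    _ = Q n r := Complex.ofReal_re _

end

end HSAux
namespace HSAux

noncomputable section

variable {n : ℕ}

lemma inner_nonneg (r : ℝ) (z : Esp n) :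
    0 ≤ ∫ w in ball (0 : Esp n) r, gauss n (z - w) :=
  integral_nonneg fun _ => gauss_nonneg _

lemma inner_le_one (r : ℝ) (z : Esp n) :
    ∫ w in ball (0 : Esp n) r, gauss n (z - w) ≤ 1 := by
  rw [← integral_gauss_sub z]
  exact setIntegral_le_integral (integrable_gauss_sub z)
    (Filter.Eventually.of_forall fun _ => gauss_nonneg _)

lemma sm_inner (r : ℝ) : StronglyMeasurable
    (fun z : Esp n => ∫ w in ball (0 : Esp n) r, gauss n (z - w)) := by
  apply StronglyMeasurable.integral_prod_right
    (f := fun z w => gauss n (z - w))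
  exact (continuous_gauss.comp (continuous_fst.sub continuous_snd)).stronglyMeasurable

lemma integrableOn_inner (r s : ℝ) : IntegrableOn
    (fun z : Esp n => ∫ w in ball (0 : Esp n) r, gauss n (z - w))
    (ball (0 : Esp n) s) volume := by
  refine Integrable.mono' ((integrableOn_const_iff (C := (1:ℝ))).mpr (Or.inr measure_ball_lt_top))
    (sm_inner r).aestronglyMeasurable.restrict
    (Filter.Eventually.of_forall fun z => ?_)
  rw [Real.norm_eq_abs, abs_of_nonneg (inner_nonneg r z)]
  exact inner_le_one r z

lemma Q_nonneg (r : ℝ) : 0 ≤ Q n r :=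
  integral_nonneg fun z => inner_nonneg r z

lemma Q_le_vol (r : ℝ) : Q n r ≤ (volume (ball (0 : Esp n) r)).toReal := by
  have h := setIntegral_mono_on (μ := (volume : Measure (Esp n)))
    (s := ball (0 : Esp n) r) (integrableOn_inner r r)
    ((integrableOn_const_iff (C := (1:ℝ))).mpr (Or.inr measure_ball_lt_top)) measurableSet_ball
    (fun z _ => inner_le_one r z)
  rw [setIntegral_const] at h
  simpa [Q, measureReal_def] using h

lemma inner_translate (s : ℝ) (z : Esp n) :
    ∫ w in ball z s, gauss n (z - w) = ∫ x in ball (0 : Esp n) s, gauss n x := by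
  rw [← integral_indicator measurableSet_ball, ← integral_indicator measurableSet_ball]
  have h : ∀ w : Esp n, (ball z s).indicator (fun w => gauss n (z - w)) w
      = (ball (0 : Esp n) s).indicator (gauss n) (z - w) := by
    intro w
    by_cases hw : w ∈ ball z s
    · rw [Set.indicator_of_mem hw, Set.indicator_of_mem]
      simpa [mem_ball, dist_eq_norm, norm_sub_rev] using hw
    · rw [Set.indicator_of_notMem hw, Set.indicator_of_notMem]
      intro hc
      exact hw (by simpa [mem_ball, dist_eq_norm, norm_sub_rev] using hc)
  rw [integral_congr_ae (Filter.Eventually.of_forall h)]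
  exact integral_sub_left_eq_self ((ball (0 : Esp n) s).indicator (gauss n)) volume z

lemma inner_ge {s r : ℝ} (z : Esp n) (hz : z ∈ ball (0 : Esp n) (r - s)) :
    (∫ x in ball (0 : Esp n) s, gauss n x) ≤ ∫ w in ball (0 : Esp n) r, gauss n (z - w) := by
  rw [← inner_translate s z]
  refine setIntegral_mono_set (integrable_gauss_sub z).integrableOn
    (Filter.Eventually.of_forall fun _ => gauss_nonneg _)
    (HasSubset.Subset.eventuallyLE fun w hw => ?_)
  rw [mem_ball] at *
  calc dist w 0 ≤ dist w z + dist z 0 := dist_triangle _ _ _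
    _ < s + (r - s) := add_lt_add hw hz
    _ = r := by ring

lemma Q_ge (s r : ℝ) (hs : 0 ≤ s) :
    (∫ x in ball (0 : Esp n) s, gauss n x) *
      (volume (ball (0 : Esp n) (r - s))).toReal ≤ Q n r := by
  have h1 : ∫ z in ball (0 : Esp n) (r - s),
      (∫ x in ball (0 : Esp n) s, gauss n x) ≤ ∫ z in ball (0 : Esp n) (r - s),
        ∫ w in ball (0 : Esp n) r, gauss n (z - w) :=
    setIntegral_mono_on ((integrableOn_const_iff (C := ∫ x in ball (0 : Esp n) s, gauss n x)).mpr (Or.inr measure_ball_lt_top))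
      (integrableOn_inner r (r - s)) measurableSet_ball (fun z hz => inner_ge z hz)
  have h2 : ∫ z in ball (0 : Esp n) (r - s),
      (∫ w in ball (0 : Esp n) r, gauss n (z - w)) ≤ Q n r :=
    setIntegral_mono_set (integrableOn_inner r r)
      (Filter.Eventually.of_forall fun z => inner_nonneg r z)
      (HasSubset.Subset.eventuallyLE (ball_subset_ball (by linarith)))
  rw [setIntegral_const] at h1
  calc (∫ x in ball (0 : Esp n) s, gauss n x) * (volume (ball (0 : Esp n) (r - s))).toReal
      = (volume (ball (0 : Esp n) (r - s))).toReal • (∫ x in ball (0 : Esp n) s, gauss n x) := by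
        rw [smul_eq_mul]; ring
    _ ≤ _ := le_trans h1 h2

lemma c_tendsto : Tendsto (fun m : ℕ => ∫ x in ball (0 : Esp n) (m : ℝ), gauss n x)
    atTop (𝓝 1) := by
  have hU : (⋃ m : ℕ, ball (0 : Esp n) (m : ℝ)) = univ := by
    refine eq_univ_of_forall fun x => ?_
    obtain ⟨m, hm⟩ := exists_nat_gt (dist x 0)
    exact mem_iUnion.mpr ⟨m, mem_ball.mpr hm⟩
  have h := tendsto_setIntegral_of_monotone (μ := (volume : Measure (Esp n)))
    (s := fun m : ℕ => ball (0 : Esp n) (m : ℝ)) (f := gauss n)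
    (fun _ => measurableSet_ball)
    (fun i j hij => ball_subset_ball (by exact_mod_cast hij))
    (by rw [hU]; exact integrable_gauss.integrableOn)
  rw [hU] at h
  rwa [setIntegral_univ, integral_gauss] at h

end

end HSAux
namespace HSAux

noncomputable section

variable {n : ℕ}

lemma vol_ball_toReal (hn : 0 < n) {r : ℝ} (hr : 0 ≤ r) :
    (volume (ball (0 : Esp n) r)).toReal
      = r ^ n * (volume (ball (0 : Esp n) 1)).toReal := by
  haveI : Nontrivial (Esp n) := Module.nontrivial_of_finrank_pos (R := ℝ)
    (by rw [finrank_euclideanSpace_fin]; exact hn)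
  rw [Measure.addHaar_ball volume (0 : Esp n) hr, finrank_euclideanSpace_fin,
    ENNReal.toReal_mul, ENNReal.toReal_ofReal (pow_nonneg hr n)]

lemma Qdiv_tendsto (hn : 0 < n) :
    Tendsto (fun r : ℝ => Q n r / (volume (ball (0 : Esp n) r)).toReal)
      atTop (𝓝 1) := by
  rw [tendsto_order]
  constructor
  · intro a ha
    have h1 : ∀ᶠ m : ℕ in atTop,
        a < ∫ x in ball (0 : Esp n) (m : ℝ), gauss n x :=
      c_tendsto.eventually (eventually_gt_nhds ha)
    obtain ⟨m, hm⟩ := h1.exists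
    set c : ℝ := ∫ x in ball (0 : Esp n) (m : ℝ), gauss n x with hc
    have hLtend : Tendsto (fun r : ℝ => c * ((r - m) / r) ^ n) atTop (𝓝 c) := by
      have hbase : Tendsto (fun r : ℝ => (r - m) / r) atTop (𝓝 1) := by
        have h0 : Tendsto (fun r : ℝ => 1 - (m : ℝ) / r) atTop (𝓝 1) := by
          have := Filter.Tendsto.div_atTop (tendsto_const_nhds (x := (m : ℝ)))
            tendsto_id
          simpa using (tendsto_const_nhds (x := (1:ℝ))).sub this
        refine h0.congr' ?_
        filter_upwards [eventually_gt_atTop (0:ℝ)] with r hr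
        field_simp
      have := hbase.pow n
      simpa using (tendsto_const_nhds (x := c)).mul this
    have hev : ∀ᶠ r : ℝ in atTop, a < c * ((r - m) / r) ^ n :=
      hLtend.eventually_const_lt hm
    filter_upwards [hev, eventually_gt_atTop (max (m : ℝ) 0)] with r h1 h2
    have hrm : (m : ℝ) < r := lt_of_le_of_lt (le_max_left _ _) h2
    have hr0 : (0 : ℝ) < r := lt_of_le_of_lt (le_max_right _ _) h2
    have hvpos : 0 < (volume (ball (0 : Esp n) r)).toReal :=
      ENNReal.toReal_pos (measure_ball_pos _ _ hr0).ne' measure_ball_lt_top.ne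
    refine lt_of_lt_of_le h1 ?_
    rw [le_div_iff₀ hvpos]
    have hkey : c * ((r - m) / r) ^ n * (volume (ball (0 : Esp n) r)).toReal
        = c * (volume (ball (0 : Esp n) (r - m))).toReal := by
      rw [vol_ball_toReal hn hr0.le, vol_ball_toReal hn (by linarith : (0:ℝ) ≤ r - m),
        div_pow]
      field_simp
    rw [hkey]
    exact Q_ge (m : ℝ) r (Nat.cast_nonneg m)
  · intro a ha
    filter_upwards [eventually_gt_atTop (0:ℝ)] with r hr
    have hvpos : 0 < (volume (ball (0 : Esp n) r)).toReal :=
      ENNReal.toReal_pos (measure_ball_pos _ _ hr).ne' measure_ball_lt_top.ne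
    exact lt_of_le_of_lt ((div_le_one hvpos).mpr (Q_le_vol r)) ha

end

end HSAux
namespace HSAux

noncomputable section

variable {n : ℕ}

lemma memL2_indicator (r : ℝ) :
    MemLp ((ball (0 : Esp n) r).indicator fun _ => (1:ℂ)) 2 volume :=
  memLp_indicator_const 2 measurableSet_ball 1 (Or.inr measure_ball_lt_top.ne)

lemma indicator_ne_zero {r : ℝ} (hr : 0 < r) :
    ¬ ((ball (0 : Esp n) r).indicator fun _ => (1:ℂ)) =ᵐ[volume] 0 := by
  intro h
  rw [indicator_ae_eq_zero] at h
  rw [Function.support_const one_ne_zero, inter_univ] at h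
  exact (measure_ball_pos volume (0 : Esp n) hr).ne' h

lemma eLpNorm_indicator_toReal (r : ℝ) :
    (eLpNorm ((ball (0 : Esp n) r).indicator fun _ => (1:ℂ)) 2 volume).toReal
      = Real.sqrt ((volume (ball (0 : Esp n) r)).toReal) := by
  rw [eLpNorm_indicator_const measurableSet_ball (by norm_num) (by norm_num)]
  have h2 : (1 / (2:ℝ≥0∞).toReal) = (1/2 : ℝ) := by norm_num
  rw [h2]
  simp only [enorm_one, one_mul]
  rw [← ENNReal.toReal_rpow, Real.sqrt_eq_rpow]

end

end HSAux

theorem sup_hs_norm_ratio_eq_one (d : ℕ) (hd : 0 < d) :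
    IsLUB {t : ℝ | ∃ F : EuclideanSpace ℝ (Fin (2 * d)) → ℂ,
        MemLp F 2 volume ∧ ¬ F =ᵐ[volume] 0 ∧
        t = hsNorm F / (eLpNorm F 2 volume).toReal} 1 ∧
      Tendsto (fun r : ℝ =>
          hsNorm ((Metric.ball (0 : EuclideanSpace ℝ (Fin (2 * d))) r).indicator
              fun _ => (1 : ℂ)) /
            (eLpNorm ((Metric.ball (0 : EuclideanSpace ℝ (Fin (2 * d))) r).indicator
              fun _ => (1 : ℂ)) 2 volume).toReal)
        atTop (nhds 1) := by
  have hn : 0 < 2 * d := by omega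
  have heq : ∀ r : ℝ,
      hsNorm ((Metric.ball (0 : EuclideanSpace ℝ (Fin (2 * d))) r).indicator
          fun _ => (1 : ℂ)) /
        (eLpNorm ((Metric.ball (0 : EuclideanSpace ℝ (Fin (2 * d))) r).indicator
          fun _ => (1 : ℂ)) 2 volume).toReal
      = Real.sqrt (HSAux.Q (2 * d) r /
          (volume (Metric.ball (0 : HSAux.Esp (2 * d)) r)).toReal) := by
    intro r
    rw [Real.sqrt_div (HSAux.Q_nonneg r), HSAux.eLpNorm_indicator_toReal r]
    congr 1
    rw [hsNorm, HSAux.hsNorm_indicator_integral r]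
  have htd : Tendsto (fun r : ℝ =>
      hsNorm ((Metric.ball (0 : EuclideanSpace ℝ (Fin (2 * d))) r).indicator
          fun _ => (1 : ℂ)) /
        (eLpNorm ((Metric.ball (0 : EuclideanSpace ℝ (Fin (2 * d))) r).indicator
          fun _ => (1 : ℂ)) 2 volume).toReal) atTop (nhds 1) := by
    have h1 : Tendsto (fun r : ℝ => Real.sqrt (HSAux.Q (2 * d) r /
        (volume (Metric.ball (0 : HSAux.Esp (2 * d)) r)).toReal)) atTop (𝓝 (Real.sqrt 1)) :=
      (Real.continuous_sqrt.continuousAt.tendsto).comp (HSAux.Qdiv_tendsto hn)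
    rw [Real.sqrt_one] at h1
    exact h1.congr fun r => (heq r).symm
  refine ⟨⟨?_, ?_⟩, htd⟩
  · rintro t ⟨F, hF, hF0, rfl⟩
    exact HSAux.ratio_le_one hF hF0
  · intro b hb
    refine le_of_tendsto htd ?_
    filter_upwards [eventually_gt_atTop (0:ℝ)] with r hr
    exact hb ⟨_, HSAux.memL2_indicator r, HSAux.indicator_ne_zero hr, rfl⟩
end

section
/- Let Ω_r¹ = {z ∈ ℝ^{2d} : r/3 ≤ |z| ≤ r} and B_{r/3} the centered ball of radius r/3. Then the convolution satisfies (χ_{Ω_r¹} * χ_{B_{r/3}})(z) ≤ c r^{2d−1} min{|z|, 2r/3} for all z ∈ ℝ^{2d}, where c depends only on d; consequently ∫_{ℝ^{2d}} e^{-π|z|²}(χ_{Ω_r¹} * χ_{B_{r/3}})(z) dz ≤ c' r^{2d−1}. -/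
open MeasureTheory

private lemma pow_sub_pow_le_aux {a b R : ℝ} (hb : 0 ≤ b) (hba : b ≤ a) (haR : a ≤ R)
    (n : ℕ) : a ^ n - b ^ n ≤ n * R ^ (n - 1) * (a - b) := by
  have hR : 0 ≤ R := hb.trans (hba.trans haR)
  rw [← geom_sum₂_mul]
  have hsum : (∑ i ∈ Finset.range n, a ^ i * b ^ (n - 1 - i)) ≤ n * R ^ (n - 1) := by
    calc (∑ i ∈ Finset.range n, a ^ i * b ^ (n - 1 - i))
        ≤ ∑ _i ∈ Finset.range n, R ^ (n - 1) := by
          apply Finset.sum_le_sum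
          intro i hi
          have h1 : a ^ i ≤ R ^ i := pow_le_pow_left₀ (hb.trans hba) haR i
          have h2 : b ^ (n - 1 - i) ≤ R ^ (n - 1 - i) := pow_le_pow_left₀ hb (hba.trans haR) _
          calc a ^ i * b ^ (n - 1 - i) ≤ R ^ i * R ^ (n - 1 - i) :=
                mul_le_mul h1 h2 (by positivity) (by positivity)
            _ = R ^ (i + (n - 1 - i)) := (pow_add R i _).symm
            _ = R ^ (n - 1) := by
                congr 1
                simp only [Finset.mem_range] at hi
                omega
      _ = n * R ^ (n - 1) := by
          rw [Finset.sum_const, Finset.card_range, nsmul_eq_mul]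
  exact mul_le_mul_of_nonneg_right hsum (by linarith)

private lemma norm_mul_exp_le (t : ℝ) (ht : 0 ≤ t) :
    t * Real.exp (-(Real.pi / 2) * t ^ 2) ≤ 1 := by
  have hpi := Real.pi_gt_three
  have h1 : t ≤ Real.exp ((Real.pi / 2) * t ^ 2) := by
    have h2 : (Real.pi / 2) * t ^ 2 + 1 ≤ Real.exp ((Real.pi / 2) * t ^ 2) :=
      Real.add_one_le_exp _
    nlinarith [sq_nonneg (t - 1)]
  calc t * Real.exp (-(Real.pi / 2) * t ^ 2)
      ≤ Real.exp ((Real.pi / 2) * t ^ 2) * Real.exp (-(Real.pi / 2) * t ^ 2) :=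
        mul_le_mul_of_nonneg_right h1 (Real.exp_pos _).le
    _ = 1 := by rw [← Real.exp_add]; ring_nf; exact Real.exp_zero

theorem annulus_ball_convolution_bound (d : ℕ) (hd : 0 < d) :
    (∃ c > (0 : ℝ), ∀ r : ℝ, 0 < r → ∀ z : EuclideanSpace ℝ (Fin (2 * d)),
        (volume ({w : EuclideanSpace ℝ (Fin (2 * d)) | r / 3 ≤ ‖w‖ ∧ ‖w‖ ≤ r}
            ∩ {w | ‖z - w‖ < r / 3})).toReal
          ≤ c * r ^ (2 * d - 1) * min ‖z‖ (2 * r / 3)) ∧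
      ∃ c' > (0 : ℝ), ∀ r : ℝ, 0 < r →
        (∫ z : EuclideanSpace ℝ (Fin (2 * d)),
            Real.exp (-Real.pi * ‖z‖ ^ 2) *
              (volume ({w : EuclideanSpace ℝ (Fin (2 * d)) | r / 3 ≤ ‖w‖ ∧ ‖w‖ ≤ r}
                ∩ {w | ‖z - w‖ < r / 3})).toReal)
          ≤ c' * r ^ (2 * d - 1) := by
  set E := EuclideanSpace ℝ (Fin (2 * d)) with hE
  haveI : NeZero (2 * d) := ⟨by omega⟩
  set n := 2 * d with hn
  have hn1 : 1 ≤ n := by omega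
  set ω := (volume (Metric.ball (0 : E) 1)).toReal with hω
  have hωpos : 0 < ω :=
    ENNReal.toReal_pos (Metric.measure_ball_pos volume 0 one_pos).ne' measure_ball_lt_top.ne
  have hfr : Module.finrank ℝ E = n := finrank_euclideanSpace_fin
  set c := (n : ℝ) * ω with hc
  have hcpos : 0 < c := by positivity
  -- main pointwise bound
  have main : ∀ r : ℝ, 0 < r → ∀ z : E,
      (volume ({w : E | r / 3 ≤ ‖w‖ ∧ ‖w‖ ≤ r} ∩ {w | ‖z - w‖ < r / 3})).toReal
        ≤ c * r ^ (n - 1) * min ‖z‖ (2 * r / 3) := by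
    intro r hr z
    set a := min r (r / 3 + ‖z‖) with ha
    have hz0 : (0:ℝ) ≤ ‖z‖ := norm_nonneg z
    have ha3 : r / 3 ≤ a := le_min (by linarith) (by linarith)
    have haR : a ≤ r := min_le_left _ _
    have ha0 : 0 ≤ a := by linarith
    have hsub : {w : E | r / 3 ≤ ‖w‖ ∧ ‖w‖ ≤ r} ∩ {w | ‖z - w‖ < r / 3}
        ⊆ Metric.closedBall 0 a \ Metric.ball 0 (r / 3) := by
      rintro w ⟨⟨hw1, hw2⟩, hw3⟩
      simp only [Set.mem_setOf_eq] at hw3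
      constructor
      · rw [Metric.mem_closedBall, dist_zero_right]
        refine le_min hw2 ?_
        have h4 : ‖w‖ - ‖z‖ ≤ ‖w - z‖ := norm_sub_norm_le w z
        rw [norm_sub_rev] at h4
        linarith
      · rw [Metric.mem_ball, dist_zero_right]
        push_neg
        exact hw1
    have hdiff : volume (Metric.closedBall (0:E) a \ Metric.ball 0 (r / 3))
        = ENNReal.ofReal (a ^ n) * volume (Metric.ball (0:E) 1)
          - ENNReal.ofReal ((r / 3) ^ n) * volume (Metric.ball (0:E) 1) := by
      rw [measure_diff (Metric.ball_subset_closedBall.trans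
            (Metric.closedBall_subset_closedBall ha3))
          measurableSet_ball.nullMeasurableSet measure_ball_lt_top.ne,
        Measure.addHaar_ball volume (0:E) (show (0:ℝ) ≤ r/3 by linarith),
        Measure.addHaar_closedBall volume (0:E) ha0, hfr]
    have hfin : ENNReal.ofReal (a ^ n) * volume (Metric.ball (0:E) 1) ≠ ⊤ :=
      ENNReal.mul_ne_top ENNReal.ofReal_ne_top measure_ball_lt_top.ne
    have hle : ENNReal.ofReal ((r / 3) ^ n) * volume (Metric.ball (0:E) 1)
        ≤ ENNReal.ofReal (a ^ n) * volume (Metric.ball (0:E) 1) :=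
      mul_le_mul_left (ENNReal.ofReal_le_ofReal (pow_le_pow_left₀ (by linarith) ha3 n)) _
    have hdiff_fin : volume (Metric.closedBall (0:E) a \ Metric.ball 0 (r / 3)) ≠ ⊤ := by
      rw [hdiff]; exact (tsub_le_self.trans_lt hfin.lt_top).ne
    have step1 : (volume ({w : E | r / 3 ≤ ‖w‖ ∧ ‖w‖ ≤ r} ∩ {w | ‖z - w‖ < r / 3})).toReal
        ≤ (a ^ n - (r / 3) ^ n) * ω := by
      have := ENNReal.toReal_mono hdiff_fin (measure_mono hsub)
      refine this.trans ?_
      rw [hdiff, ENNReal.toReal_sub_of_le hle hfin, ENNReal.toReal_mul, ENNReal.toReal_mul,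
        ENNReal.toReal_ofReal (by positivity), ENNReal.toReal_ofReal (by positivity)]
      rw [sub_mul]
    have hmin : a - r / 3 = min ‖z‖ (2 * r / 3) := by
      rcases le_total r (r / 3 + ‖z‖) with h | h
      · rw [ha, min_eq_left h, min_eq_right (by linarith)]; ring
      · rw [ha, min_eq_right h, min_eq_left (by linarith)]; ring
    have step2 : a ^ n - (r / 3) ^ n ≤ n * r ^ (n - 1) * (a - r / 3) :=
      pow_sub_pow_le_aux (by linarith) ha3 haR n
    calc (volume ({w : E | r / 3 ≤ ‖w‖ ∧ ‖w‖ ≤ r} ∩ {w | ‖z - w‖ < r / 3})).toReal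
        ≤ (a ^ n - (r / 3) ^ n) * ω := step1
      _ ≤ (n * r ^ (n - 1) * (a - r / 3)) * ω :=
          mul_le_mul_of_nonneg_right step2 hωpos.le
      _ = c * r ^ (n - 1) * min ‖z‖ (2 * r / 3) := by rw [hmin, hc]; ring
  refine ⟨⟨c, hcpos, main⟩, ?_⟩
  -- integral bound
  have hpi : (0:ℝ) < Real.pi := Real.pi_pos
  have hgauss : Integrable (fun z : E => Real.exp (-(Real.pi / 2) * ‖z‖ ^ 2)) := by
    have h := (GaussianFourier.integrable_cexp_neg_mul_sq_norm_add (V := E)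
      (b := ((Real.pi / 2 : ℝ) : ℂ)) (by simpa using div_pos hpi two_pos)
      0 0).norm
    refine h.congr (Filter.Eventually.of_forall fun z => ?_)
    have hz : (-((Real.pi / 2 : ℝ) : ℂ) * (‖z‖ : ℂ) ^ 2 + 0 * ((inner ℝ (0 : E) z : ℝ) : ℂ))
        = ((-(Real.pi / 2) * ‖z‖ ^ 2 : ℝ) : ℂ) := by push_cast; ring
    simp only [hz, Complex.norm_exp_ofReal]
  set K := ∫ z : E, Real.exp (-(Real.pi / 2) * ‖z‖ ^ 2) with hK
  have hK0 : 0 ≤ K := integral_nonneg fun z => (Real.exp_pos _).le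
  refine ⟨c * (K + 1), by positivity, fun r hr => ?_⟩
  have hbound : ∀ z : E,
      Real.exp (-Real.pi * ‖z‖ ^ 2) *
          (volume ({w : E | r / 3 ≤ ‖w‖ ∧ ‖w‖ ≤ r} ∩ {w | ‖z - w‖ < r / 3})).toReal
        ≤ c * r ^ (n - 1) * Real.exp (-(Real.pi / 2) * ‖z‖ ^ 2) := by
    intro z
    have h1 := main r hr z
    have h2 : min ‖z‖ (2 * r / 3) ≤ ‖z‖ := min_le_left _ _
    have h3 : Real.exp (-Real.pi * ‖z‖ ^ 2) *
        (volume ({w : E | r / 3 ≤ ‖w‖ ∧ ‖w‖ ≤ r} ∩ {w | ‖z - w‖ < r / 3})).toReal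
        ≤ Real.exp (-Real.pi * ‖z‖ ^ 2) * (c * r ^ (n - 1) * ‖z‖) := by
      have := h1.trans (mul_le_mul_of_nonneg_left h2 (by positivity))
      exact mul_le_mul_of_nonneg_left this (Real.exp_pos _).le
    refine h3.trans ?_
    have h4 : Real.exp (-Real.pi * ‖z‖ ^ 2) * ‖z‖ ≤ Real.exp (-(Real.pi / 2) * ‖z‖ ^ 2) := by
      have h5 := norm_mul_exp_le ‖z‖ (norm_nonneg z)
      have h6 : Real.exp (-Real.pi * ‖z‖ ^ 2)
          = Real.exp (-(Real.pi / 2) * ‖z‖ ^ 2) * Real.exp (-(Real.pi / 2) * ‖z‖ ^ 2) := by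
        rw [← Real.exp_add]; ring_nf
      rw [h6]
      calc Real.exp (-(Real.pi / 2) * ‖z‖ ^ 2) * Real.exp (-(Real.pi / 2) * ‖z‖ ^ 2) * ‖z‖
          = Real.exp (-(Real.pi / 2) * ‖z‖ ^ 2) * (‖z‖ * Real.exp (-(Real.pi / 2) * ‖z‖ ^ 2)) := by
            ring
        _ ≤ Real.exp (-(Real.pi / 2) * ‖z‖ ^ 2) * 1 :=
            mul_le_mul_of_nonneg_left h5 (Real.exp_pos _).le
        _ = _ := mul_one _
    calc Real.exp (-Real.pi * ‖z‖ ^ 2) * (c * r ^ (n - 1) * ‖z‖)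
        = (c * r ^ (n - 1)) * (Real.exp (-Real.pi * ‖z‖ ^ 2) * ‖z‖) := by ring
      _ ≤ (c * r ^ (n - 1)) * Real.exp (-(Real.pi / 2) * ‖z‖ ^ 2) :=
          mul_le_mul_of_nonneg_left h4 (by positivity)
  have hint :
      (∫ z : E, Real.exp (-Real.pi * ‖z‖ ^ 2) *
          (volume ({w : E | r / 3 ≤ ‖w‖ ∧ ‖w‖ ≤ r} ∩ {w | ‖z - w‖ < r / 3})).toReal)
        ≤ ∫ z : E, c * r ^ (n - 1) * Real.exp (-(Real.pi / 2) * ‖z‖ ^ 2) := by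
    refine integral_mono_of_nonneg (Filter.Eventually.of_forall fun z => ?_)
      ((hgauss.const_mul _)) (Filter.Eventually.of_forall hbound)
    positivity
  refine hint.trans ?_
  rw [integral_const_mul]
  calc c * r ^ (n - 1) * K ≤ c * r ^ (n - 1) * (K + 1) :=
        mul_le_mul_of_nonneg_left (by linarith) (by positivity)
    _ = c * (K + 1) * r ^ (n - 1) := by ring
end
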